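/- If K and L are finite semimodular lattices and f : K → L is a cover-preserving {0,1}-homomorphism (a lattice homomorphism with f(0)=0, f(1)=1, and x ≺ y implies f(x) ≺ f(y)), then f is injective and K and L have the same length. -/

import Mathlib

/-- A lattice is (upper) semimodular if `x ⋖ y` implies that `x ⊔ z` is covered by
or equal to `y ⊔ z`. -/
def IsSemimodular (L : Type) [Lattice L] : Prop :=
  ∀ x y z : L, x ⋖ y → (x ⊔ z = y ⊔ z ∨ (x ⊔ z) ⋖ (y ⊔ z))

/-- The length of a finite lattice: the greatest `n` such that there is a strict
chain with `n + 1` elements. -/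
noncomputable def latLength (L : Type) [Preorder L] : ℕ :=
  sSup {n : ℕ | ∃ f : Fin (n + 1) → L, StrictMono f}

section Aux

variable {α : Type} [Lattice α] [Fintype α]

lemma covSeries_strictMono (p : RelSeries {p : α × α | p.1 ⋖ p.2}) :
    StrictMono p.toFun :=
  Fin.strictMono_iff_lt_succ.mpr fun i => (p.step i).lt

lemma covSeries_head_lt_last (p : RelSeries {p : α × α | p.1 ⋖ p.2})
    (h : p.length ≠ 0) : p.head < p.last := by
  apply covSeries_strictMono
  simp [Fin.lt_def, Fin.last, Nat.pos_of_ne_zero h]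

lemma covSeries_head_eq_last (p : RelSeries {p : α × α | p.1 ⋖ p.2})
    (h : p.length = 0) : p.head = p.last := by
  show p.toFun 0 = p.toFun _
  congr 1
  ext
  simp [Fin.last, h]

/-- In a finite lattice, any `u ≤ v` are connected by a saturated (covering) chain. -/
lemma exists_covSeries (v : α) : ∀ u, u ≤ v →
    ∃ p : RelSeries {p : α × α | p.1 ⋖ p.2}, p.head = u ∧ p.last = v := by
  have wf : WellFounded ((· > ·) : α → α → Prop) := wellFounded_gt
  intro u
  induction u using WellFounded.induction wf with
  | _ u ih =>
    intro huv
    rcases eq_or_lt_of_le huv with rfl | hlt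
    · exact ⟨RelSeries.singleton _ u, rfl, rfl⟩
    · obtain ⟨c, ⟨huc, hcv⟩, hmin⟩ :=
        (wellFounded_lt (α := α)).has_min {x | u < x ∧ x ≤ v} ⟨v, hlt, le_rfl⟩
      have hcov : u ⋖ c := by
        refine ⟨huc, fun w hw hwc => ?_⟩
        exact hmin w ⟨hw, hwc.le.trans hcv⟩ hwc
      obtain ⟨p, hp1, hp2⟩ := ih c huc hcv
      exact ⟨p.cons u (hp1 ▸ hcov), by simp, by simp [hp2]⟩

/-- Jordan–Hölder: in a finite semimodular lattice, any two saturated chains with the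
same endpoints have the same length. -/
lemma jh (hs : IsSemimodular α) :
    ∀ (m : ℕ) (p q : RelSeries {p : α × α | p.1 ⋖ p.2}), p.length = m →
      p.head = q.head → p.last = q.last → q.length = m := by
  intro m
  induction m using Nat.strong_induction_on with
  | _ m ih =>
    rcases Nat.eq_zero_or_pos m with rfl | hm
    · intro p q hpm hh hl
      by_contra hq
      have := covSeries_head_lt_last q hq
      rw [← hh, ← hl, ← covSeries_head_eq_last p hpm] at this
      exact lt_irrefl _ this
    · obtain ⟨m, rfl⟩ := Nat.exists_eq_add_of_le hm
      intro p q hpm hh hl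
      have hp0 : p.length ≠ 0 := by omega
      have hq0 : q.length ≠ 0 := by
        intro h
        have h2 := covSeries_head_lt_last p hp0
        rw [hh, hl, ← covSeries_head_eq_last q h] at h2
        exact lt_irrefl _ h2
      -- first steps of the two chains
      have hax : p.head ⋖ (p.tail hp0).head := by
        rw [RelSeries.head_tail]
        convert (show p.head ⋖ p.toFun _ from p.step ⟨0, Nat.pos_of_ne_zero hp0⟩) using 2 <;>
          exact Fin.ext (by simp [Nat.mod_eq_of_lt (by omega : 1 < p.length + 1)])
      have hay : q.head ⋖ (q.tail hq0).head := by
        rw [RelSeries.head_tail]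
        convert (show q.head ⋖ q.toFun _ from q.step ⟨0, Nat.pos_of_ne_zero hq0⟩) using 2 <;>
          exact Fin.ext (by simp [Nat.mod_eq_of_lt (by omega : 1 < q.length + 1)])
      set x1 := (p.tail hp0).head with hx1
      set y1 := (q.tail hq0).head with hy1
      have htp : (p.tail hp0).length = m := by simp [hpm]
      have htlp : (p.tail hp0).last = q.last := by rw [RelSeries.last_tail, hl]
      have htlq : (q.tail hq0).last = q.last := by rw [RelSeries.last_tail]
      have hgoal : (q.tail hq0).length = m → q.length = Nat.succ 0 + m := by
        intro h; simp at h; omega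
      by_cases hxy : x1 = y1
      · exact hgoal (ih m (by omega) (p.tail hp0) (q.tail hq0) htp (by exact hxy) (htlq ▸ htlp))
      · rw [hh] at hax
        have hyz : y1 ⋖ x1 ⊔ y1 := by
          rcases hs q.head x1 y1 hax with h | h
          · rw [sup_eq_right.mpr hay.le] at h
            exact absurd (((le_sup_left.trans h.ge)).lt_of_ne hxy) (hay.2 hax.lt)
          · rwa [sup_eq_right.mpr hay.le] at h
        have hxz : x1 ⋖ x1 ⊔ y1 := by
          rcases hs q.head y1 x1 hay with h | h
          · rw [sup_eq_right.mpr hax.le, sup_comm] at h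
            exact absurd ((le_sup_right.trans h.ge).lt_of_ne (Ne.symm hxy))
              (hax.2 hay.lt)
          · rwa [sup_eq_right.mpr hax.le, sup_comm y1 x1] at h
        have hxb : x1 ≤ q.last := by
          rw [← htlp, RelSeries.last_tail]
          exact (covSeries_strictMono p).monotone (Fin.le_last _)
        have hyb : y1 ≤ q.last := by
          rw [← htlq, RelSeries.last_tail]
          exact (covSeries_strictMono q).monotone (Fin.le_last _)
        obtain ⟨E, hE1, hE2⟩ := exists_covSeries q.last (x1 ⊔ y1) (sup_le hxb hyb)
        have hC1 : (E.cons x1 (hE1 ▸ hxz)).length = m :=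
          ih m (by omega) (p.tail hp0) (E.cons x1 (hE1 ▸ hxz)) htp
            (by simp [hx1]) (by rw [htlp]; simp [hE2])
        refine hgoal (ih m (by omega) (E.cons y1 (hE1 ▸ hyz)) (q.tail hq0) ?_ (by simp [hy1])
          (by rw [htlq]; simp [hE2]))
        simpa using hC1
  
/-- `latLength` equals the length of any saturated chain from `⊥` to `⊤`. -/
lemma latLength_eq [BoundedOrder α] (hs : IsSemimodular α)
    (M : RelSeries {p : α × α | p.1 ⋖ p.2}) (hM0 : M.head = ⊥) (hM1 : M.last = ⊤) :
    latLength α = M.length := by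
  classical
  set S := {n : ℕ | ∃ f : Fin (n + 1) → α, StrictMono f} with hS
  -- height function
  set ht : α → ℕ := fun x => (exists_covSeries x ⊥ bot_le).choose.length with hht
  have htspec : ∀ x : α, (exists_covSeries x ⊥ bot_le).choose.head = ⊥ ∧
      (exists_covSeries x ⊥ bot_le).choose.last = x := fun x =>
    (exists_covSeries x ⊥ bot_le).choose_spec
  have htmono : ∀ a b : α, a < b → ht a < ht b := by
    intro a b hab
    obtain ⟨C, hC1, hC2⟩ := exists_covSeries b a hab.le
    have hC0 : C.length ≠ 0 := by
      intro h
      exact absurd (hC1 ▸ hC2 ▸ covSeries_head_eq_last C h) hab.ne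
    set sm := (exists_covSeries a ⊥ bot_le).choose.smash C ((htspec a).2.trans hC1.symm)
    have : ht b = sm.length := by
      refine jh hs sm.length sm _ rfl ?_ ?_
      · show sm.head = (exists_covSeries b ⊥ bot_le).choose.head
        rw [RelSeries.head_smash, (htspec a).1, (htspec b).1]
      · show sm.last = (exists_covSeries b ⊥ bot_le).choose.last
        rw [RelSeries.last_smash, hC2, (htspec b).2]
    have hlen : sm.length = ht a + C.length := rfl
    omega
  have htle : ∀ x : α, ht x ≤ M.length := by
    intro x
    obtain ⟨C, hC1, hC2⟩ := exists_covSeries ⊤ x le_top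
    set sm := (exists_covSeries x ⊥ bot_le).choose.smash C ((htspec x).2.trans hC1.symm)
    have : M.length = sm.length := by
      refine jh hs sm.length sm M rfl ?_ ?_
      · rw [RelSeries.head_smash, (htspec x).1, hM0]
      · rw [RelSeries.last_smash, hC2, hM1]
    have hlen : sm.length = ht x + C.length := rfl
    omega
  have hub : ∀ n ∈ S, n ≤ M.length := by
    rintro n ⟨f, hf⟩
    have key : ∀ i : Fin (n + 1), (i : ℕ) ≤ ht (f i) := by
      intro i
      induction i using Fin.induction with
      | zero => exact Nat.zero_le _
      | succ i ihv =>
        have := htmono _ _ (hf (Fin.castSucc_lt_succ (i := i)))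
        simp only [Fin.coe_castSucc] at ihv
        simp only [Fin.val_succ]
        omega
    calc n = ((Fin.last n : Fin (n + 1)) : ℕ) := by simp
    _ ≤ ht (f (Fin.last n)) := key _
    _ ≤ M.length := htle _
  have hmem : M.length ∈ S := ⟨M.toFun, covSeries_strictMono M⟩
  refine le_antisymm (csSup_le ⟨M.length, hmem⟩ hub) (le_csSup ⟨M.length, hub⟩ hmem)

end Aux

/-- A cover-preserving `{0,1}`-homomorphism between finite semimodular
lattices is injective, and the two lattices have the same length. -/
theorem statement4 (K L : Type) [Lattice K] [Lattice L] [Fintype K] [Fintype L]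
    [BoundedOrder K] [BoundedOrder L]
    (hK : IsSemimodular K) (hL : IsSemimodular L)
    (f : LatticeHom K L) (h0 : f ⊥ = ⊥) (h1 : f ⊤ = ⊤)
    (hcov : ∀ x y : K, x ⋖ y → f x ⋖ f y) :
    Function.Injective f ∧ latLength K = latLength L := by
  -- f is strictly monotone
  have hsm : ∀ a b : K, a < b → f a < f b := by
    intro a b hab
    obtain ⟨C, hC1, hC2⟩ := exists_covSeries b a hab.le
    have hC0 : C.length ≠ 0 := fun h =>
      absurd (hC1 ▸ hC2 ▸ covSeries_head_eq_last C h) hab.ne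
    set D : RelSeries {p : L × L | p.1 ⋖ p.2} :=
      ⟨C.length, fun i => f (C.toFun i), fun i => hcov _ _ (C.step i)⟩ with hD
    have := covSeries_head_lt_last D hC0
    have hh : D.head = f a := by simp only [hD, RelSeries.head]; rw [← hC1]; rfl
    have hl : D.last = f b := by simp only [hD, RelSeries.last]; rw [← hC2]; rfl
    rwa [hh, hl] at this
  constructor
  · intro x y hxy
    have h1' : f (x ⊓ y) = f x := by rw [map_inf, hxy, inf_idem]
    have hx : x ⊓ y = x := by
      by_contra h
      exact absurd h1' (hsm _ _ (lt_of_le_of_ne inf_le_left h)).ne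
    have h2' : f (x ⊓ y) = f y := by rw [map_inf, hxy, inf_idem]
    have hy : x ⊓ y = y := by
      by_contra h
      exact absurd h2' (hsm _ _ (lt_of_le_of_ne inf_le_right h)).ne
    rw [← hx, hy]
  · obtain ⟨M, hM0, hM1⟩ := exists_covSeries (⊤ : K) ⊥ bot_le
    set D : RelSeries {p : L × L | p.1 ⋖ p.2} :=
      ⟨M.length, fun i => f (M.toFun i), fun i => hcov _ _ (M.step i)⟩ with hD
    have hh : D.head = ⊥ := by
      simp only [hD, RelSeries.head]
      show f (M.toFun 0) = ⊥
      rw [show M.toFun 0 = M.head from rfl, hM0, h0]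
    have hl : D.last = ⊤ := by
      simp only [hD, RelSeries.last]
      show f (M.toFun _) = ⊤
      rw [show M.toFun (Fin.last M.length) = M.last from rfl, hM1, h1]
    rw [latLength_eq hK M hM0 hM1, latLength_eq hL D hh hl]
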